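/- Let n ≥ 1 and let Σ ⊂ ℝⁿ⁺¹ be a closed set whose parabolic diameter R₀ satisfies 0 < R₀ < ∞. Let σ be a Borel measure on ℝⁿ⁺¹ supported in Σ satisfying the ADR condition M₀⁻¹ρⁿ⁺¹ ≤ σ(Q_ρ(z,τ) ∩ Σ) ≤ M₀ρⁿ⁺¹ for every (z,τ) ∈ Σ and every 0 < ρ < R₀, where M₀ ≥ 1. Then the time-span of Σ satisfies sup{t : (x,t) ∈ Σ} − inf{t : (x,t) ∈ Σ} ≥ c·R₀², where c > 0 depends only on n and M₀. -/

import Mathlib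

open MeasureTheory Set Filter Topology

noncomputable section

/-- Points of space-time `ℝⁿ × ℝ`. -/
abbrev Pt (n : ℕ) : Type := EuclideanSpace ℝ (Fin n) × ℝ

/-- The open parabolic cube `Q_r(c)`. -/
def pcube (n : ℕ) (c : Pt n) (r : ℝ) : Set (Pt n) :=
  {p | (∀ i, |p.1 i - c.1 i| < r) ∧ c.2 - r ^ 2 < p.2 ∧ p.2 < c.2 + r ^ 2}

/-- The time-backward half cube `Q_r⁻(c)`. -/
def pcubeMinus (n : ℕ) (c : Pt n) (r : ℝ) : Set (Pt n) :=
  {p | (∀ i, |p.1 i - c.1 i| < r) ∧ c.2 - r ^ 2 < p.2 ∧ p.2 < c.2}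

/-- The time-forward half cube `Q_r⁺(c)`. -/
def pcubePlus (n : ℕ) (c : Pt n) (r : ℝ) : Set (Pt n) :=
  {p | (∀ i, |p.1 i - c.1 i| < r) ∧ c.2 < p.2 ∧ p.2 < c.2 + r ^ 2}

/-- The parabolic norm `‖(X,t)‖ = |X| + |t|^{1/2}`. -/
def pnorm (n : ℕ) (p : Pt n) : ℝ := ‖p.1‖ + Real.sqrt |p.2|

/-- The parabolic distance. -/
def pdist (n : ℕ) (p q : Pt n) : ℝ := pnorm n (p.1 - q.1, p.2 - q.2)

/-- The parabolic diameter of a set (in `ℝ≥0∞`). -/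
def pdiam (n : ℕ) (A : Set (Pt n)) : ENNReal :=
  ⨆ p ∈ A, ⨆ q ∈ A, ENNReal.ofReal (pdist n p q)

/-- The parabolic distance from a point to a set. -/
def pdistTo (n : ℕ) (p : Pt n) (A : Set (Pt n)) : ℝ := sInf ((pdist n p) '' A)

/-- The parabolic boundary `𝒫Ω`. -/
def parabolicBdry (n : ℕ) (Ω : Set (Pt n)) : Set (Pt n) :=
  {p | p ∈ frontier Ω ∧ ∀ r > 0, (pcubeMinus n p r ∩ Ωᶜ).Nonempty}

/-- The bottom boundary `ℬΩ`. -/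
def bottomBdry (n : ℕ) (Ω : Set (Pt n)) : Set (Pt n) :=
  {p | p ∈ parabolicBdry n Ω ∧ ∃ ε > 0, pcubePlus n p ε ⊆ Ω}

/-- The abnormal boundary `∂ₐΩ`. -/
def abnormalBdry (n : ℕ) (Ω : Set (Pt n)) : Set (Pt n) :=
  {p | p ∈ frontier Ω ∧ ∃ ε > 0, pcubeMinus n p ε ⊆ Ω}

/-- The singular boundary `∂ₛΩ`. -/
def singBdry (n : ℕ) (Ω : Set (Pt n)) : Set (Pt n) :=
  {p | p ∈ abnormalBdry n Ω ∧ ∃ ε > 0, pcubePlus n p ε ∩ Ω = ∅}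

/-- The essential boundary `∂ₑΩ = ∂Ω ∖ ∂ₛΩ`. -/
def essBdry (n : ℕ) (Ω : Set (Pt n)) : Set (Pt n) := frontier Ω \ singBdry n Ω

/-- `T_min(Ω)`, as an extended real number. -/
def parTmin (n : ℕ) (Ω : Set (Pt n)) : EReal := ⨅ p ∈ Ω, (p.2 : EReal)

/-- `T_max(Ω)`, as an extended real number. -/
def parTmax (n : ℕ) (Ω : Set (Pt n)) : EReal := ⨆ p ∈ Ω, (p.2 : EReal)

/-- The quasi-lateral boundary `Σ`:  `∂Ω` with the time slice of `ℬΩ` at `t = T_min(Ω)`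
removed (when `T_min(Ω) > -∞`), and the time slice of `∂ₛΩ` at `t = T_max(Ω)` removed
(when `T_max(Ω) < ∞`).  Since no real time coordinate can equal `±∞`, the `EReal`
formulation below encodes exactly this. -/
def quasiLateral (n : ℕ) (Ω : Set (Pt n)) : Set (Pt n) :=
  frontier Ω \
    ({p | p ∈ bottomBdry n Ω ∧ (p.2 : EReal) = parTmin n Ω} ∪
     {p | p ∈ singBdry n Ω ∧ (p.2 : EReal) = parTmax n Ω})

/-- The free-space heat kernel. -/
def heatKernel (n : ℕ) (X : EuclideanSpace ℝ (Fin n)) (t : ℝ)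
    (y : EuclideanSpace ℝ (Fin n)) (s : ℝ) : ℝ :=
  if s < t then
    (4 * Real.pi * (t - s)) ^ (-(n : ℝ) / 2) * Real.exp (-‖X - y‖ ^ 2 / (4 * (t - s)))
  else 0

/-- Time derivative `∂ₜ u`. -/
def timeDeriv (n : ℕ) (u : Pt n → ℝ) (p : Pt n) : ℝ := deriv (fun τ => u (p.1, τ)) p.2

/-- Spatial Laplacian `Δ_X u`. -/
def spaceLaplacian (n : ℕ) (u : Pt n → ℝ) (p : Pt n) : ℝ :=
  ∑ i : Fin n,
    iteratedDeriv 2 (fun h : ℝ => u (p.1 + h • EuclideanSpace.single i (1 : ℝ), p.2)) 0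

/-- A classical supersolution of the heat equation on `U`: continuous on `U`,
twice continuously differentiable in `X` and once in `t`, with `∂ₜ u - Δ_X u ≥ 0`. -/
structure IsSupersolutionOn (n : ℕ) (u : Pt n → ℝ) (U : Set (Pt n)) : Prop where
  cont : ContinuousOn u U
  smoothX : ∀ p ∈ U, ContDiffAt ℝ 2 (fun X => u (X, p.2)) p.1
  smoothT : ∀ p ∈ U, ContDiffAt ℝ 1 (fun τ => u (p.1, τ)) p.2
  ineq : ∀ p ∈ U, spaceLaplacian n u p ≤ timeDeriv n u p

/-- A classical subsolution of the heat equation on `U`. -/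
structure IsSubsolutionOn (n : ℕ) (u : Pt n → ℝ) (U : Set (Pt n)) : Prop where
  cont : ContinuousOn u U
  smoothX : ∀ p ∈ U, ContDiffAt ℝ 2 (fun X => u (X, p.2)) p.1
  smoothT : ∀ p ∈ U, ContDiffAt ℝ 1 (fun τ => u (p.1, τ)) p.2
  ineq : ∀ p ∈ U, timeDeriv n u p ≤ spaceLaplacian n u p

/-- A caloric function (classical solution of the heat equation) on `U`. -/
structure IsCaloricOn (n : ℕ) (u : Pt n → ℝ) (U : Set (Pt n)) : Prop where
  cont : ContinuousOn u U
  smoothX : ∀ p ∈ U, ContDiffAt ℝ 2 (fun X => u (X, p.2)) p.1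
  smoothT : ∀ p ∈ U, ContDiffAt ℝ 1 (fun τ => u (p.1, τ)) p.2
  eq : ∀ p ∈ U, timeDeriv n u p = spaceLaplacian n u p
set_option maxHeartbeats 2000000 in
/-- for a closed parabolic ADR set of finite diameter `R₀`, the time-span is
at least `c·R₀²`. -/
theorem statement_7 (n : ℕ) (hn : 1 ≤ n) (M₀ : ℝ) (hM₀ : 1 ≤ M₀) :
    ∃ c : ℝ, 0 < c ∧
      ∀ (S : Set (Pt n)) (σ : Measure (Pt n)) (R₀ : ℝ),
        IsClosed S → σ Sᶜ = 0 → 0 < R₀ → pdiam n S = ENNReal.ofReal R₀ →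
        (∀ z ∈ S, ∀ ρ : ℝ, 0 < ρ → ρ < R₀ →
          ENNReal.ofReal (M₀⁻¹ * ρ ^ (n + 1)) ≤ σ (pcube n z ρ ∩ S) ∧
          σ (pcube n z ρ ∩ S) ≤ ENNReal.ofReal (M₀ * ρ ^ (n + 1))) →
        c * R₀ ^ 2 ≤
          sSup {t : ℝ | ∃ x, ((x, t) : Pt n) ∈ S} -
            sInf {t : ℝ | ∃ x, ((x, t) : Pt n) ∈ S} := by
  have hM0 : (0:ℝ) < M₀ := lt_of_lt_of_le one_pos hM₀
  obtain ⟨B, hB⟩ : ∃ x : ℝ, x = 2 ^ n := ⟨_, rfl⟩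
  have hBpos : (0:ℝ) < B := by rw [hB]; positivity
  have hB1 : (1:ℝ) ≤ B := by rw [hB]; exact one_le_pow₀ (by norm_num)
  refine ⟨1 / (64 * M₀ ^ 4 * B ^ 4), by positivity, ?_⟩
  intro S σ R₀ hS hσ hR₀ hdiam hADR
  by_contra hcon
  push_neg at hcon
  set b := sSup {t : ℝ | ∃ x, ((x, t) : Pt n) ∈ S} with hbdef
  set a := sInf {t : ℝ | ∃ x, ((x, t) : Pt n) ∈ S} with hadef
  -- distance bound from the diameter
  have hdistbd : ∀ p ∈ S, ∀ q ∈ S, pdist n p q ≤ R₀ := by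
    intro p hp q hq
    have h1 : ENNReal.ofReal (pdist n p q) ≤ pdiam n S :=
      le_iSup₂_of_le p hp (le_iSup₂_of_le q hq le_rfl)
    rw [hdiam] at h1
    exact (ENNReal.ofReal_le_ofReal_iff hR₀.le).mp h1
  -- S is nonempty
  have hSne : S.Nonempty := by
    by_contra h
    rw [Set.not_nonempty_iff_eq_empty] at h
    rw [h] at hdiam
    have h2 : ENNReal.ofReal R₀ = 0 := by simpa [pdiam] using hdiam.symm
    rw [ENNReal.ofReal_eq_zero] at h2
    linarith
  obtain ⟨z, hz⟩ := hSne
  -- time coordinates are bounded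
  have htb : ∀ p ∈ S, |p.2 - z.2| ≤ R₀ ^ 2 := by
    intro p hp
    have h1 : pdist n p z ≤ R₀ := hdistbd p hp z hz
    have h2 : Real.sqrt |p.2 - z.2| ≤ R₀ := by
      have h3 : pdist n p z = ‖p.1 - z.1‖ + Real.sqrt |p.2 - z.2| := rfl
      have h4 := norm_nonneg (p.1 - z.1)
      linarith [h3 ▸ h1]
    calc |p.2 - z.2| = Real.sqrt |p.2 - z.2| ^ 2 := (Real.sq_sqrt (abs_nonneg _)).symm
      _ ≤ R₀ ^ 2 := by nlinarith [Real.sqrt_nonneg |p.2 - z.2|]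
  have hbdda : BddAbove {t : ℝ | ∃ x, ((x, t) : Pt n) ∈ S} := by
    refine ⟨z.2 + R₀ ^ 2, ?_⟩
    rintro t ⟨x, hx⟩
    have h1 := abs_le.mp (htb (x, t) hx)
    simp only at h1
    linarith [h1.2]
  have hbddb : BddBelow {t : ℝ | ∃ x, ((x, t) : Pt n) ∈ S} := by
    refine ⟨z.2 - R₀ ^ 2, ?_⟩
    rintro t ⟨x, hx⟩
    have h1 := abs_le.mp (htb (x, t) hx)
    simp only at h1
    linarith [h1.1]
  have hmem : ∀ p ∈ S, a ≤ p.2 ∧ p.2 ≤ b := by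
    intro p hp
    exact ⟨csInf_le hbddb ⟨p.1, hp⟩, le_csSup hbdda ⟨p.1, hp⟩⟩
  -- the geometric constants
  obtain ⟨ρ, hρdef⟩ : ∃ x : ℝ, x = R₀ / 2 := ⟨_, rfl⟩
  obtain ⟨D, hDdef⟩ : ∃ x : ℝ, x = 4 * M₀ ^ 2 * B ^ 2 := ⟨_, rfl⟩
  obtain ⟨r, hrdef⟩ : ∃ x : ℝ, x = ρ / D := ⟨_, rfl⟩
  have hρpos : 0 < ρ := by rw [hρdef]; linarith
  have hM₀sq : (1:ℝ) ≤ M₀ ^ 2 := by nlinarith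
  have hBsq : (1:ℝ) ≤ B ^ 2 := by nlinarith
  have hD4 : (4:ℝ) ≤ D := by rw [hDdef]; nlinarith
  have hDpos : (0:ℝ) < D := by linarith
  have hrpos : 0 < r := by rw [hrdef]; positivity
  have hrD : D * r = ρ := by rw [hrdef]; field_simp
  have h2rR : 2 * r < R₀ := by
    have h4r : 4 * r ≤ D * r := mul_le_mul_of_nonneg_right hD4 hrpos.le
    have hh : ρ < R₀ := by rw [hρdef]; linarith
    linarith [hrD]
  have hρR : ρ < R₀ := by rw [hρdef]; linarith
  -- time span is small, by contradiction hypothesis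
  have hcr : 1 / (64 * M₀ ^ 4 * B ^ 4) * R₀ ^ 2 = r ^ 2 := by
    rw [hrdef, hρdef, hDdef]
    have hM0' : M₀ ≠ 0 := ne_of_gt hM0
    have hB0' : B ≠ 0 := ne_of_gt hBpos
    field_simp
    ring
  have hconr : b - a < r ^ 2 := by rw [hcr] at hcon; exact hcon
  -- the grid
  obtain ⟨N, hNdef⟩ : ∃ m : ℕ, m = ⌈D⌉₊ := ⟨_, rfl⟩
  have hDN : D ≤ (N : ℝ) := by rw [hNdef]; exact Nat.le_ceil D
  have hND : (N : ℝ) ≤ 2 * D := by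
    rw [hNdef]
    have := Nat.ceil_lt_add_one hDpos.le
    linarith
  obtain ⟨A, hAdef⟩ : ∃ A : (Fin n → Fin N) → Set (Pt n),
      A = fun k =>
        {p | p ∈ pcube n z ρ ∩ S ∧
          ∀ i, z.1 i - ρ + 2 * r * ((k i : ℕ) : ℝ) ≤ p.1 i ∧
            p.1 i < z.1 i - ρ + 2 * r * ((k i : ℕ) : ℝ) + 2 * r} := ⟨_, rfl⟩
  have h2r : (0:ℝ) < 2 * r := by linarith
  have hcover : pcube n z ρ ∩ S ⊆ ⋃ k, A k := by
    intro p hp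
    have hsp : ∀ i, |p.1 i - z.1 i| < ρ := hp.1.1
    have hq0 : ∀ i, 0 ≤ (p.1 i - z.1 i + ρ) / (2 * r) := by
      intro i
      have h1 := (abs_lt.mp (hsp i)).1
      have hnum : 0 ≤ p.1 i - z.1 i + ρ := by linarith
      positivity
    have hqN : ∀ i, (p.1 i - z.1 i + ρ) / (2 * r) < (N : ℝ) := by
      intro i
      rw [div_lt_iff₀ h2r]
      have h1 := (abs_lt.mp (hsp i)).2
      have h2 : D * (2 * r) ≤ (N : ℝ) * (2 * r) := mul_le_mul_of_nonneg_right hDN h2r.le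
      nlinarith [hrD]
    refine Set.mem_iUnion.mpr
      ⟨fun i => ⟨⌊(p.1 i - z.1 i + ρ) / (2 * r)⌋₊, (Nat.floor_lt (hq0 i)).mpr (hqN i)⟩, ?_⟩
    rw [hAdef]
    refine ⟨hp, fun i => ?_⟩
    have hfl : (⌊(p.1 i - z.1 i + ρ) / (2 * r)⌋₊ : ℝ) ≤ (p.1 i - z.1 i + ρ) / (2 * r) :=
      Nat.floor_le (hq0 i)
    have hfu : (p.1 i - z.1 i + ρ) / (2 * r) < ⌊(p.1 i - z.1 i + ρ) / (2 * r)⌋₊ + 1 :=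
      Nat.lt_floor_add_one _
    have heq : 2 * r * ((p.1 i - z.1 i + ρ) / (2 * r)) = p.1 i - z.1 i + ρ := by
      field_simp
    simp only [Fin.val_mk]
    constructor
    · nlinarith [mul_le_mul_of_nonneg_left hfl h2r.le]
    · nlinarith [mul_lt_mul_of_pos_left hfu h2r]
  -- each cell has small measure
  have hAle : ∀ k, σ (A k) ≤ ENNReal.ofReal (M₀ * (2 * r) ^ (n + 1)) := by
    intro k
    rcases (A k).eq_empty_or_nonempty with h | ⟨s, hs⟩
    · rw [h]; simp
    · rw [hAdef] at hs
      have hsS : s ∈ S := hs.1.2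
      have hsub : A k ⊆ pcube n s (2 * r) ∩ S := by
        intro p hp
        rw [hAdef] at hp
        obtain ⟨hpQ, hpk⟩ := hp
        obtain ⟨hsQ, hsk⟩ := hs
        have hp2 := hmem p hpQ.2
        have hs2 := hmem s hsQ.2
        have h4 : (2 * r) ^ 2 = 4 * r ^ 2 := by ring
        have hr2 : 0 < r ^ 2 := by positivity
        refine ⟨⟨fun i => ?_, ?_, ?_⟩, hpQ.2⟩
        · have h1 := hpk i; have h2 := hsk i
          rw [abs_sub_lt_iff]
          exact ⟨by linarith [h1.1, h1.2, h2.1, h2.2], by linarith [h1.1, h1.2, h2.1, h2.2]⟩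
        · rw [h4]; linarith [hp2.1, hp2.2, hs2.1, hs2.2]
        · rw [h4]; linarith [hp2.1, hp2.2, hs2.1, hs2.2]
      calc σ (A k) ≤ σ (pcube n s (2 * r) ∩ S) := measure_mono hsub
        _ ≤ _ := (hADR s hsS (2 * r) h2r h2rR).2
  -- sum over the grid
  have hcard : Fintype.card (Fin n → Fin N) = N ^ n := by simp
  have hsum : σ (pcube n z ρ ∩ S) ≤ (N ^ n) • ENNReal.ofReal (M₀ * (2 * r) ^ (n + 1)) := by
    calc σ (pcube n z ρ ∩ S) ≤ σ (⋃ k, A k) := measure_mono hcover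
      _ ≤ ∑' k, σ (A k) := measure_iUnion_le _
      _ = ∑ k, σ (A k) := tsum_fintype _
      _ ≤ ∑ _k : Fin n → Fin N, ENNReal.ofReal (M₀ * (2 * r) ^ (n + 1)) :=
          Finset.sum_le_sum (fun k _ => hAle k)
      _ = (N ^ n) • ENNReal.ofReal (M₀ * (2 * r) ^ (n + 1)) := by
          rw [Finset.sum_const, Finset.card_univ, hcard]
  have hEN : ENNReal.ofReal (M₀⁻¹ * ρ ^ (n + 1)) ≤
      ENNReal.ofReal ((N : ℝ) ^ n * (M₀ * (2 * r) ^ (n + 1))) := by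
    refine le_trans (hADR z hz ρ hρpos hρR).1 (le_trans hsum ?_)
    rw [nsmul_eq_mul, ← ENNReal.ofReal_natCast (N ^ n),
      ← ENNReal.ofReal_mul (by positivity)]
    apply le_of_eq
    congr 1
    push_cast
    ring
  have hreal : M₀⁻¹ * ρ ^ (n + 1) ≤ (N : ℝ) ^ n * (M₀ * (2 * r) ^ (n + 1)) :=
    (ENNReal.ofReal_le_ofReal_iff (by positivity)).mp hEN
  -- derive the contradiction
  have hNr : (N : ℝ) * r ≤ 2 * ρ := by
    have h1 : (N : ℝ) * r ≤ 2 * D * r := by nlinarith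
    linarith [hrD]
  have hpow : ((N : ℝ) * r) ^ n ≤ (2 * ρ) ^ n := pow_le_pow_left₀ (by positivity) hNr n
  have e1 : (N : ℝ) ^ n * (M₀ * (2 * r) ^ (n + 1)) = ((N : ℝ) * r) ^ n * (2 * B * M₀ * r) := by
    rw [pow_succ, mul_pow, mul_pow, hB]; ring
  have e2 : ((N : ℝ) * r) ^ n * (2 * B * M₀ * r) ≤ (2 * ρ) ^ n * (2 * B * M₀ * r) :=
    mul_le_mul_of_nonneg_right hpow (by positivity)
  have e3 : (2 * ρ) ^ n * (2 * B * M₀ * r) = ρ ^ n * (2 * B ^ 2 * M₀ * r) := by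
    rw [mul_pow, hB]; ring
  have key2 : M₀⁻¹ * ρ ^ (n + 1) ≤ ρ ^ n * (2 * B ^ 2 * M₀ * r) := by
    rw [← e3]
    calc M₀⁻¹ * ρ ^ (n + 1) ≤ (N : ℝ) ^ n * (M₀ * (2 * r) ^ (n + 1)) := hreal
      _ = ((N : ℝ) * r) ^ n * (2 * B * M₀ * r) := e1
      _ ≤ _ := e2
  have hρn : 0 < ρ ^ n := by positivity
  have key3 : M₀⁻¹ * ρ ≤ 2 * B ^ 2 * M₀ * r := by
    have h2 : ρ ^ n * (M₀⁻¹ * ρ) ≤ ρ ^ n * (2 * B ^ 2 * M₀ * r) := by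
      calc ρ ^ n * (M₀⁻¹ * ρ) = M₀⁻¹ * ρ ^ (n + 1) := by rw [pow_succ]; ring
        _ ≤ _ := key2
    exact le_of_mul_le_mul_left h2 hρn
  have h5 : ρ ≤ 2 * B ^ 2 * M₀ ^ 2 * r := by
    have h6 := mul_le_mul_of_nonneg_left key3 hM0.le
    have h7 : M₀ * (M₀⁻¹ * ρ) = ρ := by field_simp
    calc ρ = M₀ * (M₀⁻¹ * ρ) := h7.symm
      _ ≤ M₀ * (2 * B ^ 2 * M₀ * r) := h6
      _ = 2 * B ^ 2 * M₀ ^ 2 * r := by ring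
  have hρr : ρ = 4 * M₀ ^ 2 * B ^ 2 * r := by rw [← hrD, hDdef]
  nlinarith [mul_pos (mul_pos (pow_pos hM0 2) (pow_pos hBpos 2)) hrpos]
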